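/- For integers 1 ≤ k ≤ T, define ζ_k = ((1/√T + 1)/(1/√T + k)) · ∏_{m=k+1}^{T} (m-1)/(1/√T + m). Then for all 2 ≤ k ≤ T, ζ_k - ζ_{k-1} = ((1/√T)(1/√T + 1)/(T(T+1))) · ∏_{m=k}^{T+1} m/(1/√T + m - 1). -/
import Mathlib

private lemma prod_shift (a b : ℕ) (f : ℕ → ℝ) :
    ∏ m ∈ Finset.Icc (a + 1) (b + 1), f m = ∏ m ∈ Finset.Icc a b, f (m + 1) := by
  rw [← Finset.map_add_right_Icc a b 1, Finset.prod_map]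
  rfl

private lemma prod_bot (a b : ℕ) (h : a ≤ b) (f : ℕ → ℝ) :
    ∏ m ∈ Finset.Icc a b, f m = f a * ∏ m ∈ Finset.Icc (a + 1) b, f m := by
  rw [Finset.Icc_add_one_left_eq_Ioc, Finset.mul_prod_Ioc_eq_prod_Icc h]

theorem zeta_difference_identity
    (T : ℕ) (hT : 1 ≤ T) (ζ : ℕ → ℝ)
    (hζ : ∀ k : ℕ, ζ k = ((1 / Real.sqrt T + 1) / (1 / Real.sqrt T + k)) *
      ∏ m ∈ Finset.Icc (k + 1) T, ((m : ℝ) - 1) / (1 / Real.sqrt T + m))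
    (k : ℕ) (hk : 2 ≤ k) (hkT : k ≤ T) :
    ζ k - ζ (k - 1) = ((1 / Real.sqrt T) * (1 / Real.sqrt T + 1) / (T * (T + 1))) *
      ∏ m ∈ Finset.Icc k (T + 1), (m : ℝ) / (1 / Real.sqrt T + m - 1) := by
  set s : ℝ := 1 / Real.sqrt T with hs_def
  have hs : 0 < s := by
    apply div_pos one_pos
    exact Real.sqrt_pos.2 (by exact_mod_cast Nat.lt_of_lt_of_le Nat.zero_lt_one hT)
  set A : ℝ := ∏ m ∈ Finset.Icc (k + 1) T, ((m : ℝ) - 1) with hA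
  set B : ℝ := ∏ m ∈ Finset.Icc (k + 1) T, (s + m) with hB
  have hBpos : 0 < B := by
    apply Finset.prod_pos
    intro i _
    positivity
  have hk1 : k - 1 + 1 = k := by omega
  have hkr : ((k - 1 : ℕ) : ℝ) = (k : ℝ) - 1 := by
    rw [Nat.cast_sub (by omega : 1 ≤ k), Nat.cast_one]
  -- ζ k
  have hζk : ζ k = (s + 1) / (s + k) * (A / B) := by
    rw [hζ k, Finset.prod_div_distrib]
  -- ζ (k-1)
  have hζk1 : ζ (k - 1) = (s + 1) / (s + ((k : ℝ) - 1)) *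
      ((((k : ℝ) - 1) * A) / ((s + k) * B)) := by
    rw [hζ (k - 1), hk1, prod_bot k T hkT, Finset.prod_div_distrib, hkr, ← hA, ← hB]
    have hx : s + (k : ℝ) ≠ 0 := by positivity
    have hy : B ≠ 0 := ne_of_gt hBpos
    field_simp
    try ring
  -- the RHS product
  have hN : ∏ m ∈ Finset.Icc k (T + 1), (m : ℝ) = A * T * (T + 1) := by
    rw [Finset.prod_Icc_succ_top (by omega), Finset.prod_congr rfl
      (fun m _ => by push_cast; ring : ∀ m ∈ Finset.Icc k T, (m : ℝ) = (((m+1) : ℕ) : ℝ) - 1),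
      ← prod_shift k T (fun m => (m : ℝ) - 1),
      Finset.prod_Icc_succ_top (by omega)]
    push_cast
    ring
  have hD : ∏ m ∈ Finset.Icc k (T + 1), (s + (m : ℝ) - 1) =
      (s + ((k : ℝ) - 1)) * ((s + k) * B) := by
    have h1 : ∏ m ∈ Finset.Icc k (T + 1), (s + (m : ℝ) - 1) =
        ∏ m ∈ Finset.Icc (k - 1) T, (s + m) := by
      rw [show k = (k - 1) + 1 from hk1.symm, prod_shift (k-1) T (fun m => s + m - 1)]
      apply Finset.prod_congr rfl
      intro m _
      push_cast
      try ring
    rw [h1, prod_bot (k-1) T (by omega), hk1, prod_bot k T hkT, hkr]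
    try ring
  have hprod : ∏ m ∈ Finset.Icc k (T + 1), (m : ℝ) / (s + m - 1) =
      (A * T * (T + 1)) / ((s + ((k : ℝ) - 1)) * ((s + k) * B)) := by
    rw [Finset.prod_div_distrib, hN, hD]
  rw [hζk, hζk1, hprod]
  have hTpos : (0 : ℝ) < T := by exact_mod_cast Nat.lt_of_lt_of_le Nat.zero_lt_one hT
  have hkpos : (2 : ℝ) ≤ (k : ℝ) := by exact_mod_cast hk
  have h1 : s + (k : ℝ) ≠ 0 := by positivity
  have h2 : s + ((k : ℝ) - 1) ≠ 0 := by nlinarith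
  field_simp
  ring
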